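/- Let d ≥ 5 be an integer and c > 0 a real number. Let X and Y be independent random variables, X having the standard Gaussian distribution N(0,1) and Y having the chi-square distribution with d degrees of freedom (the Gamma distribution with shape d/2 and rate 1/2). Then P( d X² / Y ≥ c ) ≤ 3 d² / ( c² (d−2)(d−4) ). -/

import Mathlib

open MeasureTheory ProbabilityTheory
open scoped ENNReal NNReal

open Real Set in
lemma gamma_lintegral_rpow_aux {a r q : ℝ} (ha : 0 < a) (hr : 0 < r) (haq : 0 < a + q) :
    ∫⁻ y, ENNReal.ofReal (y ^ q) ∂(gammaMeasure a r)
      = ENNReal.ofReal (r ^ (-q) * (Real.Gamma (a + q) / Real.Gamma a)) := by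
  have hmf : Measurable fun y : ℝ => ENNReal.ofReal (y ^ q) :=
    (measurable_id.pow measurable_const).ennreal_ofReal
  have hpdfm : Measurable (gammaPDF a r) := (measurable_gammaPDFReal a r).ennreal_ofReal
  rw [gammaMeasure, lintegral_withDensity_eq_lintegral_mul _ hpdfm hmf]
  have hsplit := lintegral_add_compl
    (fun y => (gammaPDF a r * fun y : ℝ => ENNReal.ofReal (y ^ q)) y)
    (measurableSet_Ici (a := (0:ℝ))) (μ := volume)
  rw [← hsplit]
  have hneg : (∫⁻ y in (Ici (0:ℝ))ᶜ,
      (gammaPDF a r * fun y : ℝ => ENNReal.ofReal (y ^ q)) y) = 0 := by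
    rw [compl_Ici]
    rw [setLIntegral_congr_fun measurableSet_Iio
      (fun y (hy : y < 0) =>
        show (gammaPDF a r * fun y : ℝ => ENNReal.ofReal (y ^ q)) y = 0 by
          simp [gammaPDF_of_neg hy]), lintegral_zero]
  rw [hneg, add_zero]
  rw [setLIntegral_congr Ioi_ae_eq_Ici.symm]
  have hcong : ∀ y ∈ Ioi (0:ℝ),
      (gammaPDF a r * fun y : ℝ => ENNReal.ofReal (y ^ q)) y
        = ENNReal.ofReal ((r ^ a / Real.Gamma a) * (y ^ (a + q - 1) * rexp (-(r * y)))) := by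
    intro y hy
    have hy' : (0:ℝ) < y := hy
    simp only [Pi.mul_apply, gammaPDF_of_nonneg hy'.le]
    rw [← ENNReal.ofReal_mul (by positivity)]
    congr 1
    rw [show a + q - 1 = (a - 1) + q by ring, rpow_add hy']
    ring
  rw [setLIntegral_congr_fun measurableSet_Ioi hcong]
  have hint : IntegrableOn
      (fun y : ℝ => (r ^ a / Real.Gamma a) * (y ^ (a + q - 1) * rexp (-(r * y)))) (Ioi 0) := by
    apply Integrable.const_mul
    have h := integrableOn_rpow_mul_exp_neg_mul_rpow
      (show (-1:ℝ) < a + q - 1 by linarith) (zero_lt_one (α := ℝ)) hr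
    simpa [Real.rpow_one, neg_mul, IntegrableOn] using h
  rw [← ofReal_integral_eq_lintegral_ofReal hint
    ((ae_restrict_iff' measurableSet_Ioi).mpr
      (ae_of_all _ (fun y (hy : y ∈ Ioi (0:ℝ)) => by
        have hy' : (0:ℝ) < y := hy
        positivity)))]
  congr 1
  rw [MeasureTheory.integral_const_mul]
  have := integral_rpow_mul_exp_neg_mul_Ioi (show (0:ℝ) < a + q from haq) hr
  rw [this]
  have h1 : (1 / r) ^ (a + q) = r ^ (-(a + q)) := by
    rw [one_div, ← rpow_neg_one r, ← Real.rpow_mul hr.le]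
    congr 1; ring
  rw [h1]
  have h2 : r ^ a * r ^ (-(a + q)) = r ^ (-q) := by
    rw [← Real.rpow_add hr]; congr 1; ring
  calc r ^ a / Real.Gamma a * (r ^ (-(a + q)) * Real.Gamma (a + q))
      = (r ^ a * r ^ (-(a + q))) * (Real.Gamma (a + q) / Real.Gamma a) := by ring
    _ = _ := by rw [h2]

open Real Set in
lemma gaussian_lintegral_pow4_aux :
    ∫⁻ x, ENNReal.ofReal (x ^ 4) ∂(gaussianReal 0 1) = ENNReal.ofReal 3 := by
  have hmf : Measurable fun x : ℝ => ENNReal.ofReal (x ^ 4) :=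
    (measurable_id.pow_const 4).ennreal_ofReal
  have hpdfm : Measurable (gaussianPDF 0 1) := (measurable_gaussianPDFReal 0 1).ennreal_ofReal
  rw [gaussianReal_of_var_ne_zero 0 one_ne_zero,
    lintegral_withDensity_eq_lintegral_mul _ hpdfm hmf]
  have hpdf : ∀ x : ℝ, gaussianPDFReal 0 1 x = (√(2 * π))⁻¹ * (rexp (-(2⁻¹) * x ^ 2)) := by
    intro x
    simp only [gaussianPDFReal, NNReal.coe_one, mul_one, sub_zero]
    congr 1
    congr 1
    ring
  have hcong : ∀ x : ℝ,
      (gaussianPDF 0 1 * fun x : ℝ => ENNReal.ofReal (x ^ 4)) x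
        = ENNReal.ofReal ((√(2 * π))⁻¹ * (x ^ 4 * rexp (-(2⁻¹) * x ^ 2))) := by
    intro x
    simp only [Pi.mul_apply, gaussianPDF, hpdf x]
    rw [← ENNReal.ofReal_mul (by positivity)]
    congr 1; ring
  rw [lintegral_congr hcong]
  have hint : Integrable (fun x : ℝ => (√(2 * π))⁻¹ * (x ^ 4 * rexp (-(2⁻¹) * x ^ 2))) := by
    apply Integrable.const_mul
    have h := integrable_rpow_mul_exp_neg_mul_sq (show (0:ℝ) < 2⁻¹ by norm_num)
      (show (-1:ℝ) < 4 by norm_num)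
    have heq : (fun x : ℝ => x ^ (4:ℝ) * rexp (-2⁻¹ * x ^ 2))
        = fun x : ℝ => x ^ (4:ℕ) * rexp (-(2⁻¹) * x ^ 2) := by
      funext x
      rw [show ((4:ℝ)) = ((4:ℕ):ℝ) by norm_num, Real.rpow_natCast]
    exact heq ▸ h
  rw [← ofReal_integral_eq_lintegral_ofReal hint (ae_of_all _ (fun x => by positivity))]
  congr 1
  rw [MeasureTheory.integral_const_mul]
  have habs : (∫ x : ℝ, x ^ 4 * rexp (-(2⁻¹) * x ^ 2))
      = 2 * ∫ x in Ioi (0:ℝ), x ^ 4 * rexp (-(2⁻¹) * x ^ 2) := by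
    rw [← integral_comp_abs (f := fun x : ℝ => x ^ 4 * rexp (-(2⁻¹) * x ^ 2))]
    congr 1
    funext x
    rw [show |x| ^ 4 = x ^ 4 by rw [← abs_pow]; exact abs_of_nonneg (by positivity),
      sq_abs]
  rw [habs]
  have hioi : (∫ x in Ioi (0:ℝ), x ^ 4 * rexp (-(2⁻¹) * x ^ 2))
      = (2⁻¹ : ℝ) ^ (-(4 + 1 : ℝ) / 2) * (1 / 2) * Real.Gamma ((4 + 1) / 2) := by
    have h := integral_rpow_mul_exp_neg_mul_rpow (show (0:ℝ) < 2 by norm_num)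
      (show (-1:ℝ) < 4 by norm_num) (show (0:ℝ) < 2⁻¹ by norm_num)
    rw [← h]
    refine setIntegral_congr_fun measurableSet_Ioi (fun x hx => ?_)
    rw [show ((4:ℝ)) = ((4:ℕ):ℝ) by norm_num, Real.rpow_natCast,
      show ((2:ℝ)) = ((2:ℕ):ℝ) by norm_num, Real.rpow_natCast]
  rw [hioi]
  have hG : Real.Gamma ((4 + 1) / 2 : ℝ) = 3 / 4 * √π := by
    rw [show ((4 + 1) / 2 : ℝ) = 3/2 + 1 by norm_num,
      Real.Gamma_add_one (by norm_num),
      show ((3:ℝ)/2) = 1/2 + 1 by norm_num,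
      Real.Gamma_add_one (by norm_num), Real.Gamma_one_half_eq]
    ring
  rw [hG]
  have hpow : (2⁻¹ : ℝ) ^ (-(4 + 1 : ℝ) / 2) = 4 * √2 := by
    rw [← Real.rpow_neg_one 2, ← Real.rpow_mul (by norm_num),
      show (-1 : ℝ) * (-(4 + 1) / 2) = 2 + 1/2 by norm_num,
      Real.rpow_add (by norm_num), ← Real.sqrt_eq_rpow,
      show (2:ℝ) ^ (2:ℝ) = ((2:ℝ) ^ ((2:ℕ):ℝ)) by norm_num,
      Real.rpow_natCast]
    norm_num
  rw [hpow]
  have h2π : √(2 * π) = √2 * √π := Real.sqrt_mul (by norm_num) π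
  rw [h2π]
  have hs2 : (0:ℝ) < √2 := Real.sqrt_pos.mpr (by norm_num)
  have hsπ : (0:ℝ) < √π := Real.sqrt_pos.mpr Real.pi_pos
  field_simp

theorem student_t_sq_tail {Ω : Type*} [MeasurableSpace Ω] (P : Measure Ω)
    [IsProbabilityMeasure P] (d : ℕ) (hd : 5 ≤ d) (c : ℝ) (hc : 0 < c)
    (X Y : Ω → ℝ) (hXm : Measurable X) (hYm : Measurable Y)
    (hXY : IndepFun X Y P)
    (hX : Measure.map X P = gaussianReal 0 1)
    (hY : Measure.map Y P = gammaMeasure ((d : ℝ) / 2) (1 / 2)) :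
    P {ω | c ≤ (d : ℝ) * X ω ^ 2 / Y ω}
      ≤ ENNReal.ofReal (3 * (d : ℝ) ^ 2 / (c ^ 2 * ((d : ℝ) - 2) * ((d : ℝ) - 4))) := by
  have hd5 : (5:ℝ) ≤ (d:ℝ) := by exact_mod_cast hd
  set A : Set Ω := {ω | c ≤ (d : ℝ) * X ω ^ 2 / Y ω} with hA
  have hAmeas : MeasurableSet A :=
    measurableSet_le measurable_const ((measurable_const.mul (hXm.pow_const 2)).div hYm)
  -- pointwise Markov bound
  have key : ∀ ω ∈ A, (1:ℝ) ≤ (d:ℝ)^2 / c^2 * (X ω ^ 4 * ((Y ω ^ 2)⁻¹)) := by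
    intro ω hω
    have hω' : c ≤ (d : ℝ) * X ω ^ 2 / Y ω := hω
    have hY0 : Y ω ≠ 0 := by
      intro h; rw [h, div_zero] at hω'; linarith
    have h1 : (1:ℝ) ≤ (d : ℝ) * X ω ^ 2 / Y ω / c := (one_le_div hc).2 hω'
    have h2 : (1:ℝ) ≤ ((d : ℝ) * X ω ^ 2 / Y ω / c) ^ 2 := by nlinarith
    calc (1:ℝ) ≤ ((d : ℝ) * X ω ^ 2 / Y ω / c) ^ 2 := h2
      _ = (d:ℝ)^2 / c^2 * (X ω ^ 4 * ((Y ω ^ 2)⁻¹)) := by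
          field_simp
  -- functions on ℝ
  set f : ℝ → ℝ≥0∞ := fun x => ENNReal.ofReal (x ^ 4) with hf
  set g : ℝ → ℝ≥0∞ := fun y => ENNReal.ofReal ((y ^ 2)⁻¹) with hg
  have hfm : Measurable f := (measurable_id.pow_const 4).ennreal_ofReal
  have hgm : Measurable g := ((measurable_id.pow_const 2).inv).ennreal_ofReal
  have step1 : P A ≤ ∫⁻ ω, ENNReal.ofReal ((d:ℝ)^2 / c^2) * ((f ∘ X) * (g ∘ Y)) ω ∂P := by
    have : P A = ∫⁻ ω, A.indicator (fun _ => (1:ℝ≥0∞)) ω ∂P := by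
      rw [lintegral_indicator hAmeas]; simp
    rw [this]
    refine lintegral_mono fun ω => ?_
    by_cases hω : ω ∈ A
    · rw [Set.indicator_of_mem hω]
      calc (1:ℝ≥0∞) ≤ ENNReal.ofReal ((d:ℝ)^2 / c^2 * (X ω ^ 4 * ((Y ω ^ 2)⁻¹))) :=
            ENNReal.one_le_ofReal.2 (key ω hω)
        _ = ENNReal.ofReal ((d:ℝ)^2 / c^2) * ((f ∘ X) * (g ∘ Y)) ω := by
            rw [ENNReal.ofReal_mul (by positivity), ENNReal.ofReal_mul (by positivity)]
            rfl
    · rw [Set.indicator_of_notMem hω]; exact zero_le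
  have hindep : IndepFun (f ∘ X) (g ∘ Y) P := hXY.comp hfm hgm
  have step2 : (∫⁻ ω, ((f ∘ X) * (g ∘ Y)) ω ∂P)
      = (∫⁻ ω, (f ∘ X) ω ∂P) * ∫⁻ ω, (g ∘ Y) ω ∂P :=
    lintegral_mul_eq_lintegral_mul_lintegral_of_indepFun (hfm.comp hXm) (hgm.comp hYm) hindep
  have hXval : (∫⁻ ω, (f ∘ X) ω ∂P) = ENNReal.ofReal 3 := by
    rw [show (∫⁻ ω, (f ∘ X) ω ∂P) = ∫⁻ x, f x ∂(Measure.map X P) from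
      (lintegral_map hfm hXm).symm, hX]
    exact gaussian_lintegral_pow4_aux
  have hYval : (∫⁻ ω, (g ∘ Y) ω ∂P)
      = ENNReal.ofReal (1 / (((d:ℝ) - 2) * ((d:ℝ) - 4))) := by
    rw [show (∫⁻ ω, (g ∘ Y) ω ∂P) = ∫⁻ y, g y ∂(Measure.map Y P) from
      (lintegral_map hgm hYm).symm, hY]
    have hconv : ∀ y : ℝ, ((y ^ 2)⁻¹) = y ^ (-2 : ℝ) := by
      intro y
      rw [show (-2:ℝ) = ((-2:ℤ):ℝ) by norm_num, Real.rpow_intCast, zpow_neg,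
        show ((2:ℤ)) = ((2:ℕ):ℤ) from rfl, zpow_natCast]
    have : g = fun y => ENNReal.ofReal (y ^ (-2:ℝ)) := by
      funext y
      show ENNReal.ofReal ((y ^ 2)⁻¹) = ENNReal.ofReal (y ^ (-2:ℝ))
      rw [hconv y]
    rw [this, gamma_lintegral_rpow_aux (by linarith) (by norm_num) (by push_cast; linarith)]
    congr 1
    set G : ℝ := Real.Gamma ((d:ℝ)/2 + -2) with hG
    have hΓpos : 0 < G := Real.Gamma_pos_of_pos (by linarith)
    have hΓ : Real.Gamma ((d:ℝ)/2)
        = ((d:ℝ)/2 - 1) * (((d:ℝ)/2 - 2) * G) := by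
      rw [show (d:ℝ)/2 = ((d:ℝ)/2 - 1) + 1 by ring,
        Real.Gamma_add_one (by intro h; nlinarith [h]),
        show (d:ℝ)/2 - 1 = ((d:ℝ)/2 - 2) + 1 by ring,
        Real.Gamma_add_one (by intro h; nlinarith [h])]
      rw [hG]
      ring_nf
    have hr2 : ((1:ℝ)/2) ^ (-(-2:ℝ)) = 1/4 := by
      rw [show (-(-2:ℝ)) = ((2:ℕ):ℝ) by norm_num, Real.rpow_natCast]
      norm_num
    rw [hr2, hΓ]
    have hp1 : (0:ℝ) < (d:ℝ)/2 - 1 := by linarith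
    have hp2 : (0:ℝ) < (d:ℝ)/2 - 2 := by linarith
    have hstep : G / (((d:ℝ)/2 - 1) * (((d:ℝ)/2 - 2) * G))
        = 1 / (((d:ℝ)/2 - 1) * ((d:ℝ)/2 - 2)) := by
      rw [div_eq_div_iff (by positivity) (by positivity)]
      ring
    rw [hstep, div_mul_div_comm, one_mul]
    congr 1
    ring
  calc P A ≤ ∫⁻ ω, ENNReal.ofReal ((d:ℝ)^2 / c^2) * ((f ∘ X) * (g ∘ Y)) ω ∂P := step1
    _ = ENNReal.ofReal ((d:ℝ)^2 / c^2) * ∫⁻ ω, ((f ∘ X) * (g ∘ Y)) ω ∂P :=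
        lintegral_const_mul _ ((hfm.comp hXm).mul (hgm.comp hYm))
    _ = ENNReal.ofReal ((d:ℝ)^2 / c^2)
          * (ENNReal.ofReal 3 * ENNReal.ofReal (1 / (((d:ℝ) - 2) * ((d:ℝ) - 4)))) := by
        rw [step2, hXval, hYval]
    _ = ENNReal.ofReal (3 * (d : ℝ) ^ 2 / (c ^ 2 * ((d : ℝ) - 2) * ((d : ℝ) - 4))) := by
        rw [← ENNReal.ofReal_mul (by positivity), ← ENNReal.ofReal_mul (by positivity)]
        congr 1
        have h2 : ((d:ℝ) - 2) ≠ 0 := by intro h; nlinarith [h]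
        have h4 : ((d:ℝ) - 4) ≠ 0 := by intro h; nlinarith [h]
        field_simp
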